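/- (Correctness of the Riemann integral via midpoint sampling) Let f : ℝ → ℝ be continuous on the closed interval [0,1]. Then the midpoint Riemann sums converge to the integral: the sequence n ↦ (1/n) · ∑_{i=0}^{n−1} f((2i+1)/(2n)) tends to ∫ x in 0..1, f x as n → ∞. -/

import Mathlib

/-- For a function continuous on `[0,1]`, the midpoint Riemann sums converge to
the integral over `[0,1]`. -/
theorem midpoint_riemann_sums_tendsto_integral (f : ℝ → ℝ)
    (hf : ContinuousOn f (Set.Icc 0 1)) :
    Filter.Tendsto
      (fun n : ℕ =>
        (1 / (n : ℝ)) * ∑ i ∈ Finset.range n, f ((2 * (i : ℝ) + 1) / (2 * (n : ℝ))))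
      Filter.atTop (nhds (∫ x in (0:ℝ)..1, f x)) := by
  have hu : UniformContinuousOn f (Set.Icc 0 1) :=
    isCompact_Icc.uniformContinuousOn_of_continuous hf
  rw [Metric.tendsto_atTop]
  intro ε hε
  rw [Metric.uniformContinuousOn_iff] at hu
  obtain ⟨δ, hδ, hδ'⟩ := hu (ε / 2) (by linarith)
  obtain ⟨N, hN⟩ := exists_nat_one_div_lt hδ
  refine ⟨N + 1, fun n hn => ?_⟩
  have hn0 : 0 < n := lt_of_lt_of_le (Nat.succ_pos N) hn
  have hnR : (0 : ℝ) < n := by exact_mod_cast hn0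
  have hnN : ((N : ℝ) + 1) ≤ n := by exact_mod_cast hn
  have hδn : 1 / (2 * (n : ℝ)) < δ := by
    have h1 : 1 / (2 * (n : ℝ)) < 1 / (n : ℝ) := by
      apply div_lt_div_of_pos_left one_pos hnR
      linarith
    have h2 : 1 / (n : ℝ) ≤ 1 / ((N : ℝ) + 1) :=
      one_div_le_one_div_of_le (by positivity) hnN
    linarith
  set a : ℕ → ℝ := fun i => (i : ℝ) / n with ha
  set m : ℕ → ℝ := fun i => (2 * (i : ℝ) + 1) / (2 * (n : ℝ)) with hm
  have hsub : ∀ i < n, Set.Icc (a i) (a (i + 1)) ⊆ Set.Icc (0 : ℝ) 1 := by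
    intro i hi
    apply Set.Icc_subset_Icc
    · exact div_nonneg (Nat.cast_nonneg i) hnR.le
    · simp only [ha]
      rw [div_le_one hnR]
      exact_mod_cast Nat.succ_le_of_lt hi
  have hle : ∀ i : ℕ, a i ≤ a (i + 1) := by
    intro i
    simp only [ha]
    gcongr
    linarith
  have hint : ∀ k < n, IntervalIntegrable f MeasureTheory.volume (a k) (a (k + 1)) := by
    intro k hk
    apply ContinuousOn.intervalIntegrable
    rw [Set.uIcc_of_le (hle k)]
    exact hf.mono (hsub k hk)
  have hsplit : (∫ x in (0:ℝ)..1, f x)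
      = ∑ i ∈ Finset.range n, ∫ x in a i..a (i + 1), f x := by
    rw [intervalIntegral.sum_integral_adjacent_intervals hint]
    simp [ha, div_self hnR.ne']
  have hgap : ∀ i : ℕ, a (i + 1) - a i = 1 / (n : ℝ) := by
    intro i
    simp only [ha]
    push_cast
    field_simp
    ring
  have hmlo : ∀ i : ℕ, m i - a i = 1 / (2 * (n : ℝ)) := by
    intro i
    simp only [hm, ha]
    field_simp
    ring
  have hmhi : ∀ i : ℕ, a (i + 1) - m i = 1 / (2 * (n : ℝ)) := by
    intro i
    simp only [hm, ha]
    push_cast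
    field_simp
    ring
  have key : (1 / (n : ℝ)) * ∑ i ∈ Finset.range n, f (m i) - ∫ x in (0:ℝ)..1, f x
      = ∑ i ∈ Finset.range n, ∫ x in a i..a (i + 1), (f (m i) - f x) := by
    rw [hsplit, Finset.mul_sum, ← Finset.sum_sub_distrib]
    refine Finset.sum_congr rfl fun i hi => ?_
    rw [intervalIntegral.integral_sub (intervalIntegrable_const)
      (hint i (Finset.mem_range.mp hi)), intervalIntegral.integral_const,
      smul_eq_mul, hgap i]
  have hbound : ∀ i < n,
      |∫ x in a i..a (i + 1), (f (m i) - f x)| ≤ ε / 2 * (1 / (n : ℝ)) := by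
    intro i hi
    have hmem : m i ∈ Set.Icc (0 : ℝ) 1 := by
      have h2n : (0:ℝ) < 1 / (2 * (n:ℝ)) := by positivity
      exact hsub i hi ⟨by linarith [hmlo i], by linarith [hmhi i]⟩
    have := intervalIntegral.norm_integral_le_of_norm_le_const
      (C := ε / 2) (f := fun x => f (m i) - f x) (a := a i) (b := a (i + 1)) ?_
    · rw [Real.norm_eq_abs] at this
      calc |∫ x in a i..a (i + 1), (f (m i) - f x)|
          ≤ ε / 2 * |a (i + 1) - a i| := this
        _ = ε / 2 * (1 / (n : ℝ)) := by rw [hgap i, abs_of_pos (by positivity)]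
    · intro x hx
      rw [Set.uIoc_of_le (hle i)] at hx
      have hxIcc : x ∈ Set.Icc (0 : ℝ) 1 := hsub i hi ⟨hx.1.le, hx.2⟩
      have hdist : dist (m i) x < δ := by
        rw [Real.dist_eq]
        have h1 : m i - x ≤ 1 / (2 * (n : ℝ)) := by linarith [hx.1, hmlo i]
        have h2 : x - m i ≤ 1 / (2 * (n : ℝ)) := by linarith [hx.2, hmhi i]
        calc |m i - x| ≤ 1 / (2 * (n : ℝ)) := abs_sub_le_iff.mpr ⟨h1, h2⟩
          _ < δ := hδn
      have := hδ' (m i) hmem x hxIcc hdist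
      rw [Real.dist_eq] at this
      rw [Real.norm_eq_abs]
      exact this.le
  have hsum : |∑ i ∈ Finset.range n, ∫ x in a i..a (i + 1), (f (m i) - f x)| ≤ ε / 2 := by
    calc |∑ i ∈ Finset.range n, ∫ x in a i..a (i + 1), (f (m i) - f x)|
        ≤ ∑ i ∈ Finset.range n, |∫ x in a i..a (i + 1), (f (m i) - f x)| :=
          Finset.abs_sum_le_sum_abs _ _
      _ ≤ ∑ i ∈ Finset.range n, ε / 2 * (1 / (n : ℝ)) :=
          Finset.sum_le_sum fun i hi => hbound i (Finset.mem_range.mp hi)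
      _ = ε / 2 := by
          rw [Finset.sum_const, Finset.card_range, nsmul_eq_mul]
          field_simp
  rw [Real.dist_eq, key]
  linarith
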